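/- Let S be a commutative ring and let M₁ and M₂ be finitely generated projective S-modules. Then the canonical S-algebra homomorphism End_S(M₁) ⊗_S End_S(M₂) → End_S(M₁ ⊗_S M₂), determined by (f ⊗ g) ↦ (m₁ ⊗ m₂ ↦ f(m₁) ⊗ g(m₂)), is an isomorphism of S-algebras. -/

import Mathlib

open TensorProduct

section Aux

variable {S M₁ M₂ : Type*} [CommRing S]
    [AddCommGroup M₁] [Module S M₁] [AddCommGroup M₂] [Module S M₂]

/-- Bijectivity of `homTensorHomMap` for finite projective modules, via a retraction from
the free case. -/
theorem homTensorHomMap_bijective_aux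
    [Module.Finite S M₁] [Module.Projective S M₁]
    [Module.Finite S M₂] [Module.Projective S M₂] :
    Function.Bijective (TensorProduct.homTensorHomMap (RingHom.id S) M₁ M₂ M₁ M₂) := by
  obtain ⟨n₁, p₁, i₁, -, -, hpi₁⟩ := Module.Finite.exists_comp_eq_id_of_projective S M₁
  obtain ⟨n₂, p₂, i₂, -, -, hpi₂⟩ := Module.Finite.exists_comp_eq_id_of_projective S M₂
  set F₁ := Fin n₁ → S
  set F₂ := Fin n₂ → S
  -- the free case is an equivalence
  have hF : Function.Bijective (TensorProduct.homTensorHomMap (RingHom.id S) F₁ F₂ F₁ F₂) := by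
    have hcoe : ⇑(TensorProduct.homTensorHomMap (RingHom.id S) F₁ F₂ F₁ F₂) =
        ⇑(homTensorHomEquiv S F₁ F₂ F₁ F₂) :=
      funext fun x => (homTensorHomEquiv_apply x).symm
    rw [hcoe]
    exact (homTensorHomEquiv S F₁ F₂ F₁ F₂).bijective
  have hpi₁' : ∀ m, p₁ (i₁ m) = m := fun m => congrFun (congrArg DFunLike.coe hpi₁) m
  have hpi₂' : ∀ m, p₂ (i₂ m) = m := fun m => congrFun (congrArg DFunLike.coe hpi₂) m
  -- the four transfer maps
  let u : Module.End S M₁ ⊗[S] Module.End S M₂ →ₗ[S] Module.End S F₁ ⊗[S] Module.End S F₂ :=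
    TensorProduct.map
      { toFun := fun f => i₁ ∘ₗ f ∘ₗ p₁
        map_add' := fun f g => by ext x; simp
        map_smul' := fun c f => by ext x; simp }
      { toFun := fun g => i₂ ∘ₗ g ∘ₗ p₂
        map_add' := fun f g => by ext x; simp
        map_smul' := fun c f => by ext x; simp }
  let v : Module.End S F₁ ⊗[S] Module.End S F₂ →ₗ[S] Module.End S M₁ ⊗[S] Module.End S M₂ :=
    TensorProduct.map
      { toFun := fun f => p₁ ∘ₗ f ∘ₗ i₁
        map_add' := fun f g => by ext x; simp
        map_smul' := fun c f => by ext x; simp }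
      { toFun := fun g => p₂ ∘ₗ g ∘ₗ i₂
        map_add' := fun f g => by ext x; simp
        map_smul' := fun c f => by ext x; simp }
  let u' : Module.End S (M₁ ⊗[S] M₂) →ₗ[S] Module.End S (F₁ ⊗[S] F₂) :=
    { toFun := fun h => TensorProduct.map i₁ i₂ ∘ₗ h ∘ₗ TensorProduct.map p₁ p₂
      map_add' := fun f g => by ext x; simp
      map_smul' := fun c f => by ext x; simp }
  let v' : Module.End S (F₁ ⊗[S] F₂) →ₗ[S] Module.End S (M₁ ⊗[S] M₂) :=
    { toFun := fun h => TensorProduct.map p₁ p₂ ∘ₗ h ∘ₗ TensorProduct.map i₁ i₂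
      map_add' := fun f g => by ext x; simp
      map_smul' := fun c f => by ext x; simp }
  have hvu : ∀ x, v (u x) = x := by
    intro x
    induction x with
    | zero => simp
    | tmul f g =>
      simp only [u, v, TensorProduct.map_tmul, LinearMap.coe_mk, AddHom.coe_mk]
      congr 1 <;> ext m <;> simp [hpi₁', hpi₂']
    | add x y hx hy => simp [hx, hy]
  have hmap : ∀ z : M₁ ⊗[S] M₂, TensorProduct.map p₁ p₂ (TensorProduct.map i₁ i₂ z) = z := by
    intro z
    rw [← LinearMap.comp_apply, ← TensorProduct.map_comp, hpi₁, hpi₂, TensorProduct.map_id,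
      LinearMap.id_apply]
  have hv'u' : ∀ h, v' (u' h) = h := by
    intro h
    ext m₁ m₂
    simp only [u', v', LinearMap.coe_mk, AddHom.coe_mk, LinearMap.comp_apply,
      TensorProduct.AlgebraTensorModule.curry_apply, TensorProduct.curry_apply,
      LinearMap.coe_restrictScalars]
    rw [TensorProduct.map_tmul, hmap, TensorProduct.map_tmul, hpi₁', hpi₂']
  -- the two commuting squares
  have sq1 : ∀ x, u' (TensorProduct.homTensorHomMap (RingHom.id S) M₁ M₂ M₁ M₂ x) =
      TensorProduct.homTensorHomMap (RingHom.id S) F₁ F₂ F₁ F₂ (u x) := by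
    intro x
    induction x with
    | zero => simp
    | tmul f g =>
      simp only [u, u', TensorProduct.map_tmul, TensorProduct.homTensorHomMap_apply,
        LinearMap.coe_mk, AddHom.coe_mk]
      rw [← TensorProduct.map_comp, ← TensorProduct.map_comp]
    | add x y hx hy => simp [hx, hy]
  have sq2 : ∀ x, v' (TensorProduct.homTensorHomMap (RingHom.id S) F₁ F₂ F₁ F₂ x) =
      TensorProduct.homTensorHomMap (RingHom.id S) M₁ M₂ M₁ M₂ (v x) := by
    intro x
    induction x with
    | zero => simp
    | tmul f g =>
      simp only [v, v', TensorProduct.map_tmul, TensorProduct.homTensorHomMap_apply,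
        LinearMap.coe_mk, AddHom.coe_mk]
      rw [← TensorProduct.map_comp, ← TensorProduct.map_comp]
    | add x y hx hy => simp [hx, hy]
  constructor
  · intro x y hxy
    have : TensorProduct.homTensorHomMap (RingHom.id S) F₁ F₂ F₁ F₂ (u x) =
        TensorProduct.homTensorHomMap (RingHom.id S) F₁ F₂ F₁ F₂ (u y) := by
      rw [← sq1, ← sq1, hxy]
    have := hF.injective this
    calc x = v (u x) := (hvu x).symm
    _ = v (u y) := by rw [this]
    _ = y := hvu y
  · intro h
    obtain ⟨z, hz⟩ := hF.surjective (u' h)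
    refine ⟨v z, ?_⟩
    rw [← sq2, hz, hv'u']

end Aux

/-- Let `S` be a commutative ring and `M₁`, `M₂` finitely generated projective `S`-modules.
Then the canonical `S`-algebra homomorphism
`End_S(M₁) ⊗[S] End_S(M₂) → End_S(M₁ ⊗[S] M₂)`, `f ⊗ g ↦ (m₁ ⊗ m₂ ↦ f m₁ ⊗ g m₂)`,
is an isomorphism of `S`-algebras. -/
theorem endTensorEnd_equiv (S M₁ M₂ : Type*) [CommRing S]
    [AddCommGroup M₁] [Module S M₁] [AddCommGroup M₂] [Module S M₂]
    [Module.Finite S M₁] [Module.Projective S M₁]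
    [Module.Finite S M₂] [Module.Projective S M₂] :
    ∃ e : (Module.End S M₁ ⊗[S] Module.End S M₂) ≃ₐ[S] Module.End S (M₁ ⊗[S] M₂),
      ∀ (f : Module.End S M₁) (g : Module.End S M₂),
        e (f ⊗ₜ[S] g) = TensorProduct.map f g := by
  have hφ : ∀ x, (Module.endTensorEndAlgHom (R := S) (S := S) (A := S) (M := M₁) (N := M₂)) x
      = TensorProduct.homTensorHomMap (RingHom.id S) M₁ M₂ M₁ M₂ x := by
    intro x
    induction x with
    | zero => simp
    | tmul f g =>
      rw [Module.endTensorEndAlgHom_apply, TensorProduct.homTensorHomMap_apply]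
      ext m₁ m₂
      rfl
    | add x y hx hy => simp [hx, hy]
  have hbij : Function.Bijective
      (Module.endTensorEndAlgHom (R := S) (S := S) (A := S) (M := M₁) (N := M₂)) := by
    have := homTensorHomMap_bijective_aux (S := S) (M₁ := M₁) (M₂ := M₂)
    constructor
    · intro x y h; exact this.injective (by rw [← hφ, ← hφ, h])
    · intro h; obtain ⟨x, hx⟩ := this.surjective h; exact ⟨x, by rw [hφ, hx]⟩
  refine ⟨AlgEquiv.ofBijective _ hbij, fun f g => ?_⟩
  rw [AlgEquiv.coe_ofBijective, hφ, TensorProduct.homTensorHomMap_apply]
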